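/- Let D be a Hermitian n×n complex matrix in block form D = [[A, V],[V*, B]], where A is k×k, B is m×m (k + m = n), and ‖V‖ ≤ 1/2. Let 0 < ε ≤ 1/2 and suppose that B has no eigenvalues in the open interval (−2ε, 2ε). Then B is invertible and C_ε(D) ≤ C_{βε}(A − V·B⁻¹·V*), where β = 2·(‖B⁻¹‖ + 1)². -/

import Mathlib

open Matrix

/-- Number of eigenvalues (with multiplicity) of a Hermitian matrix in the open
interval `(a, b)`. -/
noncomputable def eigCountIoo {n : Type*} [Fintype n] [DecidableEq n]
    (M : Matrix n n ℂ) (a b : ℝ) : ℕ :=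
  if hM : M.IsHermitian then Nat.card {i : n // hM.eigenvalues i ∈ Set.Ioo a b} else 0

/-- The operator (spectral) norm of a matrix, i.e. the norm of the induced operator
between Euclidean spaces. -/
noncomputable def matNorm {m n : Type*} [Fintype m] [Fintype n] [DecidableEq n]
    (M : Matrix m n ℂ) : ℝ :=
  ‖LinearMap.toContinuousLinearMap (Matrix.toEuclideanLin M)‖

set_option linter.unusedSectionVars false
set_option maxHeartbeats 1000000

section Basic
variable {ι κ : Type*} [Fintype ι] [Fintype κ] [DecidableEq ι] [DecidableEq κ]

lemma matNorm_nonneg (M : Matrix ι κ ℂ) : 0 ≤ matNorm M := norm_nonneg _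

lemma norm_toEuclideanLin_le (M : Matrix ι κ ℂ) (x : EuclideanSpace ℂ κ) :
    ‖toEuclideanLin M x‖ ≤ matNorm M * ‖x‖ := by
  have := (LinearMap.toContinuousLinearMap (Matrix.toEuclideanLin M)).le_opNorm x
  simpa [matNorm] using this

lemma matNorm_le {M : Matrix ι κ ℂ} {C : ℝ}
    (h : ∀ x, ‖toEuclideanLin M x‖ ≤ C * ‖x‖) (hC : 0 ≤ C) : matNorm M ≤ C := by
  refine ContinuousLinearMap.opNorm_le_bound _ hC ?_
  intro x; simpa using h x

lemma toEuclideanLin_mul_apply {α : Type*} [Fintype α] [DecidableEq α]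
    (M : Matrix ι κ ℂ) (N : Matrix κ α ℂ) (x : EuclideanSpace ℂ α) :
    toEuclideanLin (M * N) x = toEuclideanLin M (toEuclideanLin N x) := by
  simp [toEuclideanLin_apply, mulVec_mulVec]

lemma toEuclideanLin_one_apply (x : EuclideanSpace ℂ ι) :
    toEuclideanLin (1 : Matrix ι ι ℂ) x = x := by
  simp [toEuclideanLin_apply]

end Basic

section Spec
variable {ι : Type*} [Fintype ι] [DecidableEq ι] {M : Matrix ι ι ℂ} (hM : M.IsHermitian)

lemma toEuclideanLin_eigenvectorBasis (j : ι) :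
    toEuclideanLin M (hM.eigenvectorBasis j) = (hM.eigenvalues j : ℂ) • hM.eigenvectorBasis j := by
  have h := hM.mulVec_eigenvectorBasis j
  apply (WithLp.equiv 2 _).injective
  ext i
  have := congrFun h i
  simpa [toEuclideanLin_apply, Complex.real_smul] using this

lemma repr_toEuclideanLin (x : EuclideanSpace ℂ ι) (i : ι) :
    hM.eigenvectorBasis.repr (toEuclideanLin M x) i
      = (hM.eigenvalues i : ℂ) * hM.eigenvectorBasis.repr x i := by
  have hsym := (Matrix.isHermitian_iff_isSymmetric.1 hM)
  rw [OrthonormalBasis.repr_apply_apply, OrthonormalBasis.repr_apply_apply,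
    ← hsym (hM.eigenvectorBasis i) x, toEuclideanLin_eigenvectorBasis hM i,
    inner_smul_left, Complex.conj_ofReal]

lemma normsq_repr (b : OrthonormalBasis ι ℂ (EuclideanSpace ℂ ι)) (x : EuclideanSpace ℂ ι) :
    ‖x‖ ^ 2 = ∑ i, ‖b.repr x i‖ ^ 2 := by
  rw [← b.repr.norm_map x, EuclideanSpace.norm_eq, Real.sq_sqrt]
  positivity

lemma normsq_toEuclideanLin (x : EuclideanSpace ℂ ι) :
    ‖toEuclideanLin M x‖ ^ 2
      = ∑ i, (hM.eigenvalues i) ^ 2 * ‖hM.eigenvectorBasis.repr x i‖ ^ 2 := by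
  rw [normsq_repr hM.eigenvectorBasis]
  refine Finset.sum_congr rfl fun i _ => ?_
  rw [repr_toEuclideanLin hM, norm_mul, mul_pow, Complex.norm_real, Real.norm_eq_abs, sq_abs]

lemma norm_lt_of_repr (x : EuclideanSpace ℂ ι) {c : ℝ}
    (hsupp : ∀ i, hM.eigenvectorBasis.repr x i ≠ 0 → |hM.eigenvalues i| < c)
    (hx : x ≠ 0) : ‖toEuclideanLin M x‖ < c * ‖x‖ := by
  have hxr : hM.eigenvectorBasis.repr x ≠ 0 := by
    simpa using (hM.eigenvectorBasis.repr.map_ne_zero_iff.2 hx)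
  obtain ⟨i0, hi0⟩ : ∃ i, hM.eigenvectorBasis.repr x i ≠ 0 := by
    by_contra h; push_neg at h; exact hxr (by ext i; simpa using h i)
  have hc : 0 < c := lt_of_le_of_lt (abs_nonneg _) (hsupp i0 hi0)
  have hsq : ‖toEuclideanLin M x‖ ^ 2 < (c * ‖x‖) ^ 2 := by
    rw [normsq_toEuclideanLin hM, mul_pow, normsq_repr hM.eigenvectorBasis,
      Finset.mul_sum]
    refine Finset.sum_lt_sum (fun i _ => ?_) ⟨i0, Finset.mem_univ i0, ?_⟩
    · by_cases h : hM.eigenvectorBasis.repr x i = 0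
      · simp [h]
      · have := hsupp i h
        have h2 : (hM.eigenvalues i) ^ 2 ≤ c ^ 2 := by
          rw [← sq_abs]; exact pow_le_pow_left₀ (abs_nonneg _) this.le 2
        have := sq_nonneg ‖hM.eigenvectorBasis.repr x i‖
        nlinarith
    · have := hsupp i0 hi0
      have h2 : (hM.eigenvalues i0) ^ 2 < c ^ 2 := by
        rw [← sq_abs]; exact pow_lt_pow_left₀ this (abs_nonneg _) (by norm_num)
      have h3 : 0 < ‖hM.eigenvectorBasis.repr x i0‖ ^ 2 := pow_pos (norm_pos_iff.2 hi0) 2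
      nlinarith
  exact lt_of_pow_lt_pow_left₀ 2 (by positivity) hsq

lemma le_norm_of_repr (x : EuclideanSpace ℂ ι) {c : ℝ} (hc : 0 ≤ c)
    (hsupp : ∀ i, hM.eigenvectorBasis.repr x i ≠ 0 → c ≤ |hM.eigenvalues i|) :
    c * ‖x‖ ≤ ‖toEuclideanLin M x‖ := by
  have hsq : (c * ‖x‖) ^ 2 ≤ ‖toEuclideanLin M x‖ ^ 2 := by
    rw [normsq_toEuclideanLin hM, mul_pow, normsq_repr hM.eigenvectorBasis, Finset.mul_sum]
    refine Finset.sum_le_sum fun i _ => ?_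
    by_cases h : hM.eigenvectorBasis.repr x i = 0
    · simp [h]
    · have := hsupp i h
      have h2 : c ^ 2 ≤ (hM.eigenvalues i) ^ 2 := by
        rw [← sq_abs (hM.eigenvalues i)]; exact pow_le_pow_left₀ hc this 2
      have := sq_nonneg ‖hM.eigenvectorBasis.repr x i‖
      nlinarith
  exact le_of_pow_le_pow_left₀ two_ne_zero (norm_nonneg _) hsq

end Spec

section Span
variable {ι : Type*} [Fintype ι] [DecidableEq ι]

/-- The subspace of vectors whose coordinates (w.r.t. an orthonormal basis) are supported on
indices satisfying `P`. -/
def coordSpan (b : OrthonormalBasis ι ℂ (EuclideanSpace ℂ ι)) (P : ι → Prop) :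
    Submodule ℂ (EuclideanSpace ℂ ι) where
  carrier := {x | ∀ i, ¬ P i → b.repr x i = 0}
  zero_mem' := by intro i _; simp
  add_mem' := by intro x y hx hy i hi; rw [map_add]; simp [hx i hi, hy i hi]
  smul_mem' := by intro c x hx i hi; rw [_root_.map_smul]; simp [hx i hi]

lemma mem_coordSpan {b : OrthonormalBasis ι ℂ (EuclideanSpace ℂ ι)} {P : ι → Prop}
    {x : EuclideanSpace ℂ ι} :
    x ∈ coordSpan b P ↔ ∀ i, ¬ P i → b.repr x i = 0 := Iff.rfl

lemma coordSpan_eq_span (b : OrthonormalBasis ι ℂ (EuclideanSpace ℂ ι)) (P : ι → Prop)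
    [DecidablePred P] :
    coordSpan b P = Submodule.span ℂ (Set.range fun i : {i // P i} => b i.1) := by
  apply le_antisymm
  · intro x hx
    rw [← b.sum_repr x, ← Finset.sum_filter_of_ne (p := fun i => P i) (fun i _ h => by
      by_contra hp
      exact h (by rw [hx i hp, zero_smul]))]
    refine Submodule.sum_mem _ fun i hi => ?_
    rw [Finset.mem_filter] at hi
    exact Submodule.smul_mem _ _ (Submodule.subset_span ⟨⟨i, hi.2⟩, rfl⟩)
  · rw [Submodule.span_le]
    rintro _ ⟨⟨i, hi⟩, rfl⟩
    intro j hj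
    rw [b.repr_self, EuclideanSpace.single_apply]
    simp only [ite_eq_right_iff]
    intro h; exact absurd (h ▸ hi) hj

lemma finrank_coordSpan (b : OrthonormalBasis ι ℂ (EuclideanSpace ℂ ι)) (P : ι → Prop)
    [DecidablePred P] :
    Module.finrank ℂ (coordSpan b P) = Fintype.card {i // P i} := by
  rw [coordSpan_eq_span]
  exact finrank_span_eq_card
    (b.orthonormal.linearIndependent.comp Subtype.val Subtype.val_injective)

/-- Key counting lemma: a subspace on which `M` shrinks by factor `< c` has dimension at most
the number of eigenvalues of `M` of absolute value `< c`. -/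
lemma finrank_le_card_eig {M : Matrix ι ι ℂ} (hM : M.IsHermitian) (c : ℝ)
    (U : Submodule ℂ (EuclideanSpace ℂ ι))
    (hU : ∀ u ∈ U, u ≠ 0 → ‖toEuclideanLin M u‖ < c * ‖u‖) :
    Module.finrank ℂ U ≤ Fintype.card {i // |hM.eigenvalues i| < c} := by
  classical
  rcases eq_or_ne U ⊥ with rfl | hUne
  · simp
  obtain ⟨u0, hu0U, hu0⟩ := Submodule.exists_mem_ne_zero_of_ne_bot hUne
  have hc : 0 < c := by
    have h1 := hU u0 hu0U hu0
    have h2 : (0:ℝ) ≤ ‖toEuclideanLin M u0‖ := norm_nonneg _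
    nlinarith [norm_pos_iff.2 hu0]
  set W : Submodule ℂ (EuclideanSpace ℂ ι) :=
    coordSpan hM.eigenvectorBasis (fun i => c ≤ |hM.eigenvalues i|) with hW
  have hdisj : Disjoint U W := by
    rw [Submodule.disjoint_def]
    intro u huU huW
    by_contra hu
    have h1 := hU u huU hu
    have h2 : c * ‖u‖ ≤ ‖toEuclideanLin M u‖ :=
      le_norm_of_repr hM u hc.le (fun i hi => by
        by_contra hge
        exact hi (huW i hge))
    linarith
  have hsum : Module.finrank ℂ U + Module.finrank ℂ W
      = Module.finrank ℂ (U ⊔ W : Submodule ℂ (EuclideanSpace ℂ ι)) := by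
    have := Submodule.finrank_sup_add_finrank_inf_eq U W
    rw [hdisj.eq_bot] at this
    simpa using this.symm
  have hle : Module.finrank ℂ (U ⊔ W : Submodule ℂ (EuclideanSpace ℂ ι)) ≤ Fintype.card ι := by
    simpa [finrank_euclideanSpace] using
      Submodule.finrank_le (U ⊔ W : Submodule ℂ (EuclideanSpace ℂ ι))
  have hWrank : Module.finrank ℂ W = Fintype.card {i // c ≤ |hM.eigenvalues i|} :=
    finrank_coordSpan _ _
  have hcompl : Fintype.card {i // |hM.eigenvalues i| < c}
      = Fintype.card ι - Fintype.card {i // c ≤ |hM.eigenvalues i|} := by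
    rw [← Fintype.card_subtype_compl (fun i => c ≤ |hM.eigenvalues i|)]
    exact Fintype.card_congr (Equiv.subtypeEquivRight fun i => by simp [not_le])
  have hWle : Fintype.card {i // c ≤ |hM.eigenvalues i|} ≤ Fintype.card ι :=
    Fintype.card_subtype_le _
  omega

end Span

section Proj
variable {ι κ : Type*} [Fintype ι] [Fintype κ] [DecidableEq ι] [DecidableEq κ]

/-- Projection onto the first block of coordinates. -/
noncomputable def projl : EuclideanSpace ℂ (ι ⊕ κ) →ₗ[ℂ] EuclideanSpace ℂ ι where
  toFun x := (WithLp.equiv 2 _).symm (fun i => x (Sum.inl i))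
  map_add' x y := rfl
  map_smul' c x := rfl

/-- Projection onto the second block of coordinates. -/
noncomputable def projr : EuclideanSpace ℂ (ι ⊕ κ) →ₗ[ℂ] EuclideanSpace ℂ κ where
  toFun x := (WithLp.equiv 2 _).symm (fun i => x (Sum.inr i))
  map_add' x y := rfl
  map_smul' c x := rfl

@[simp] lemma projl_apply (x : EuclideanSpace ℂ (ι ⊕ κ)) (i : ι) : projl x i = x (Sum.inl i) := rfl
@[simp] lemma projr_apply (x : EuclideanSpace ℂ (ι ⊕ κ)) (i : κ) : projr x i = x (Sum.inr i) := rfl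

lemma normsq_decomp (x : EuclideanSpace ℂ (ι ⊕ κ)) :
    ‖x‖ ^ 2 = ‖(projl x : EuclideanSpace ℂ ι)‖ ^ 2 + ‖(projr x : EuclideanSpace ℂ κ)‖ ^ 2 := by
  have hx : ‖x‖ ^ 2 = ∑ i, ‖x i‖ ^ 2 := by
    rw [EuclideanSpace.norm_eq, Real.sq_sqrt (by positivity)]
  have hl : ‖(projl x : EuclideanSpace ℂ ι)‖ ^ 2 = ∑ i, ‖(projl x : EuclideanSpace ℂ ι) i‖ ^ 2 := by
    rw [EuclideanSpace.norm_eq, Real.sq_sqrt (by positivity)]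
  have hr : ‖(projr x : EuclideanSpace ℂ κ)‖ ^ 2 = ∑ i, ‖(projr x : EuclideanSpace ℂ κ) i‖ ^ 2 := by
    rw [EuclideanSpace.norm_eq, Real.sq_sqrt (by positivity)]
  rw [hx, hl, hr, Fintype.sum_sum_type]
  simp

lemma norm_projl_le (x : EuclideanSpace ℂ (ι ⊕ κ)) : ‖(projl x : EuclideanSpace ℂ ι)‖ ≤ ‖x‖ := by
  have := normsq_decomp x
  have h2 := sq_nonneg ‖(projr x : EuclideanSpace ℂ κ)‖
  refine le_of_pow_le_pow_left₀ two_ne_zero (norm_nonneg _) (by linarith)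

lemma norm_projr_le (x : EuclideanSpace ℂ (ι ⊕ κ)) : ‖(projr x : EuclideanSpace ℂ κ)‖ ≤ ‖x‖ := by
  have := normsq_decomp x
  have h2 := sq_nonneg ‖(projl x : EuclideanSpace ℂ ι)‖
  refine le_of_pow_le_pow_left₀ two_ne_zero (norm_nonneg _) (by linarith)

lemma norm_le_proj_add (x : EuclideanSpace ℂ (ι ⊕ κ)) :
    ‖x‖ ≤ ‖(projl x : EuclideanSpace ℂ ι)‖ + ‖(projr x : EuclideanSpace ℂ κ)‖ := by
  have := normsq_decomp x
  have h1 := norm_nonneg (projl x : EuclideanSpace ℂ ι)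
  have h2 := norm_nonneg (projr x : EuclideanSpace ℂ κ)
  refine le_of_pow_le_pow_left₀ two_ne_zero (by positivity) (by nlinarith)

lemma projl_toEuclideanLin_fromBlocks (A : Matrix ι ι ℂ) (V : Matrix ι κ ℂ)
    (W : Matrix κ ι ℂ) (B : Matrix κ κ ℂ) (x : EuclideanSpace ℂ (ι ⊕ κ)) :
    (projl (toEuclideanLin (fromBlocks A V W B) x) : EuclideanSpace ℂ ι)
      = toEuclideanLin A (projl x) + toEuclideanLin V (projr x) := by
  apply (WithLp.equiv 2 _).injective
  ext i
  simp [toEuclideanLin_apply, mulVec, dotProduct, Fintype.sum_sum_type, fromBlocks]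

lemma projr_toEuclideanLin_fromBlocks (A : Matrix ι ι ℂ) (V : Matrix ι κ ℂ)
    (W : Matrix κ ι ℂ) (B : Matrix κ κ ℂ) (x : EuclideanSpace ℂ (ι ⊕ κ)) :
    (projr (toEuclideanLin (fromBlocks A V W B) x) : EuclideanSpace ℂ κ)
      = toEuclideanLin W (projl x) + toEuclideanLin B (projr x) := by
  apply (WithLp.equiv 2 _).injective
  ext i
  simp [toEuclideanLin_apply, mulVec, dotProduct, Fintype.sum_sum_type, fromBlocks]

end Proj

theorem stmt12 {k m : ℕ} (A : Matrix (Fin k) (Fin k) ℂ) (B : Matrix (Fin m) (Fin m) ℂ)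
    (V : Matrix (Fin k) (Fin m) ℂ) (hA : A.IsHermitian) (hB : B.IsHermitian)
    (hV : matNorm V ≤ 1 / 2) (ε : ℝ) (hε : 0 < ε)
    (hε2 : ε ≤ 1 / 2) (hgap : eigCountIoo B (-(2 * ε)) (2 * ε) = 0) :
    IsUnit B ∧
      eigCountIoo (Matrix.fromBlocks A V Vᴴ B) (-ε) ε ≤
        eigCountIoo (A - V * B⁻¹ * Vᴴ)
          (-(2 * (matNorm B⁻¹ + 1) ^ 2 * ε)) (2 * (matNorm B⁻¹ + 1) ^ 2 * ε) := by
  classical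
  have hD : (Matrix.fromBlocks A V Vᴴ B).IsHermitian := by
    rw [Matrix.IsHermitian, fromBlocks_conjTranspose, conjTranspose_conjTranspose, hA.eq, hB.eq]
  -- eigenvalue gap for B
  have hgap' : ∀ i, 2 * ε ≤ |hB.eigenvalues i| := by
    rw [eigCountIoo, dif_pos hB, Nat.card_eq_fintype_card] at hgap
    have he := Fintype.card_eq_zero_iff.mp hgap
    intro i
    by_contra h
    push_neg at h
    exact he.elim ⟨i, by rw [Set.mem_Ioo, ← abs_lt]; exact h⟩
  have hBdet : IsUnit B.det := by
    rw [hB.det_eq_prod_eigenvalues]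
    rw [isUnit_iff_ne_zero, Finset.prod_ne_zero_iff]
    intro i _
    intro h0
    rw [RCLike.ofReal_eq_zero] at h0
    have := hgap' i
    rw [h0] at this
    simp at this
    linarith
  have hBunit : IsUnit B := (Matrix.isUnit_iff_isUnit_det B).2 hBdet
  have hBBinv : B * B⁻¹ = 1 := mul_nonsing_inv B hBdet
  have hBinvB : B⁻¹ * B = 1 := nonsing_inv_mul B hBdet
  refine ⟨hBunit, ?_⟩
  set N := matNorm B⁻¹ with hNdef
  have hN0 : 0 ≤ N := matNorm_nonneg _
  have hNε : N * ε ≤ 1 / 2 := by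
    have hNinv : ∀ y, ‖toEuclideanLin B⁻¹ y‖ ≤ (2 * ε)⁻¹ * ‖y‖ := by
      intro y
      have hy : toEuclideanLin B (toEuclideanLin B⁻¹ y) = y := by
        rw [← toEuclideanLin_mul_apply, hBBinv, toEuclideanLin_one_apply]
      have h := le_norm_of_repr hB (toEuclideanLin B⁻¹ y) (c := 2 * ε) (by positivity)
        (fun i _ => hgap' i)
      rw [hy] at h
      rw [inv_mul_eq_div, le_div_iff₀ (by positivity)]
      linarith
    have hNle : N ≤ (2 * ε)⁻¹ := matNorm_le hNinv (by positivity)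
    have := mul_le_mul_of_nonneg_right hNle hε.le
    calc N * ε ≤ (2 * ε)⁻¹ * ε := this
      _ = 1 / 2 := by field_simp
  have hVH : matNorm Vᴴ = matNorm V := by
    rw [matNorm, matNorm, Matrix.toEuclideanLin_conjTranspose_eq_adjoint,
      LinearMap.adjoint_toContinuousLinearMap]
    exact ContinuousLinearMap.adjoint.norm_map _
  have hS : (A - V * B⁻¹ * Vᴴ).IsHermitian := by
    rw [Matrix.IsHermitian, conjTranspose_sub, hA.eq, conjTranspose_mul, conjTranspose_mul,
      conjTranspose_conjTranspose, conjTranspose_nonsing_inv, hB.eq, Matrix.mul_assoc]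
  set β : ℝ := 2 * (N + 1) ^ 2 with hβ
  -- key estimate
  set W := coordSpan hD.eigenvectorBasis (fun i => |hD.eigenvalues i| < ε) with hWdef
  have key : ∀ x ∈ W, x ≠ 0 →
      (projl x : EuclideanSpace ℂ (Fin k)) ≠ 0 ∧
        ‖toEuclideanLin (A - V * B⁻¹ * Vᴴ) (projl x)‖ < β * ε * ‖(projl x : EuclideanSpace ℂ (Fin k))‖ := by
    intro x hxW hx
    set x1 : EuclideanSpace ℂ (Fin k) := projl x with hx1def
    set x2 : EuclideanSpace ℂ (Fin m) := projr x with hx2def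
    set r : EuclideanSpace ℂ (Fin k ⊕ Fin m) := toEuclideanLin (Matrix.fromBlocks A V Vᴴ B) x
      with hrdef
    set r1 : EuclideanSpace ℂ (Fin k) := projl r with hr1def
    set r2 : EuclideanSpace ℂ (Fin m) := projr r with hr2def
    have hr : ‖r‖ < ε * ‖x‖ := by
      refine norm_lt_of_repr hD x (fun i hi => ?_) hx
      by_contra h
      exact hi (hxW i h)
    have hr1 : ‖r1‖ ≤ ‖r‖ := norm_projl_le r
    have hr2 : ‖r2‖ ≤ ‖r‖ := norm_projr_le r
    have hblock1 : r1 = toEuclideanLin A x1 + toEuclideanLin V x2 :=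
      projl_toEuclideanLin_fromBlocks A V Vᴴ B x
    have hblock2 : r2 = toEuclideanLin Vᴴ x1 + toEuclideanLin B x2 :=
      projr_toEuclideanLin_fromBlocks A V Vᴴ B x
    have hBB : toEuclideanLin B⁻¹ (toEuclideanLin B x2) = x2 := by
      rw [← toEuclideanLin_mul_apply, hBinvB, toEuclideanLin_one_apply]
    have hx2eq : toEuclideanLin B⁻¹ (toEuclideanLin Vᴴ x1) = toEuclideanLin B⁻¹ r2 - x2 := by
      rw [hblock2, map_add, hBB]
      abel
    have hVx1 : ‖toEuclideanLin Vᴴ x1‖ ≤ 1 / 2 * ‖x1‖ := by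
      refine le_trans (norm_toEuclideanLin_le Vᴴ x1) ?_
      rw [hVH]
      exact mul_le_mul_of_nonneg_right hV (norm_nonneg _)
    have hx2norm : ‖x2‖ ≤ N * ‖r2‖ + N * (1 / 2 * ‖x1‖) := by
      have : x2 = toEuclideanLin B⁻¹ r2 - toEuclideanLin B⁻¹ (toEuclideanLin Vᴴ x1) := by
        rw [hx2eq]; abel
      rw [this]
      refine le_trans (norm_sub_le _ _) (add_le_add (norm_toEuclideanLin_le _ _) ?_)
      exact le_trans (norm_toEuclideanLin_le _ _) (mul_le_mul_of_nonneg_left hVx1 hN0)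
    have hxnorm : ‖x‖ ≤ (2 + N) * ‖x1‖ := by
      have h1 := norm_le_proj_add x
      have h3 : N * ‖r2‖ ≤ N * (ε * ‖x‖) :=
        mul_le_mul_of_nonneg_left (le_trans hr2 hr.le) hN0
      have h4 := mul_le_mul_of_nonneg_right hNε (norm_nonneg x)
      rw [← hx1def, ← hx2def] at h1
      nlinarith [norm_nonneg x, norm_nonneg x1]
    have hx1ne : x1 ≠ 0 := by
      intro h0
      apply hx
      rw [← norm_le_zero_iff]
      rw [h0, norm_zero, mul_zero] at hxnorm
      exact hxnorm
    have hSx1 : toEuclideanLin (A - V * B⁻¹ * Vᴴ) x1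
        = r1 - toEuclideanLin V (toEuclideanLin B⁻¹ r2) := by
      have esub : toEuclideanLin (A - V * B⁻¹ * Vᴴ) x1
          = toEuclideanLin A x1 - toEuclideanLin (V * B⁻¹ * Vᴴ) x1 := by
        rw [map_sub]; rfl
      have emul : toEuclideanLin (V * B⁻¹ * Vᴴ) x1
          = toEuclideanLin V (toEuclideanLin B⁻¹ (toEuclideanLin Vᴴ x1)) := by
        rw [toEuclideanLin_mul_apply, toEuclideanLin_mul_apply]
      rw [esub, emul, hx2eq, map_sub, hblock1]
      abel
    refine ⟨hx1ne, ?_⟩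
    have h9 : ‖toEuclideanLin (A - V * B⁻¹ * Vᴴ) x1‖ ≤ ‖r1‖ + 1 / 2 * (N * ‖r2‖) := by
      rw [hSx1]
      refine le_trans (norm_sub_le _ _) (add_le_add le_rfl ?_)
      calc ‖toEuclideanLin V (toEuclideanLin B⁻¹ r2)‖
          ≤ matNorm V * ‖toEuclideanLin B⁻¹ r2‖ := norm_toEuclideanLin_le _ _
        _ ≤ 1 / 2 * (N * ‖r2‖) := by
            refine mul_le_mul hV (norm_toEuclideanLin_le _ _) (norm_nonneg _) (by norm_num)
    calc ‖toEuclideanLin (A - V * B⁻¹ * Vᴴ) x1‖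
        ≤ ‖r1‖ + 1 / 2 * (N * ‖r2‖) := h9
      _ ≤ (1 + N / 2) * ‖r‖ := by nlinarith [hr1, hr2, hN0, norm_nonneg r]
      _ < (1 + N / 2) * (ε * ‖x‖) := by
          exact mul_lt_mul_of_pos_left hr (by linarith)
      _ ≤ (1 + N / 2) * (ε * ((2 + N) * ‖x1‖)) := by
          exact mul_le_mul_of_nonneg_left
            (mul_le_mul_of_nonneg_left hxnorm hε.le) (by linarith)
      _ ≤ β * ε * ‖x1‖ := by
          rw [hβ]
          nlinarith [mul_nonneg (mul_nonneg hN0 hε.le) (norm_nonneg x1),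
            mul_nonneg (mul_nonneg (mul_nonneg hN0 hN0) hε.le) (norm_nonneg x1)]
  -- assemble counts
  rw [eigCountIoo, eigCountIoo, dif_pos hD, dif_pos hS, Nat.card_eq_fintype_card,
    Nat.card_eq_fintype_card]
  have hcardD : Fintype.card {i // hD.eigenvalues i ∈ Set.Ioo (-ε) ε}
      = Fintype.card {i // |hD.eigenvalues i| < ε} :=
    Fintype.card_congr (Equiv.subtypeEquivRight fun i => by rw [Set.mem_Ioo, ← abs_lt])
  have hcardS : Fintype.card {i // hS.eigenvalues i ∈ Set.Ioo (-(β * ε)) (β * ε)}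
      = Fintype.card {i // |hS.eigenvalues i| < β * ε} :=
    Fintype.card_congr (Equiv.subtypeEquivRight fun i => by rw [Set.mem_Ioo, ← abs_lt])
  have hWrank : Module.finrank ℂ W = Fintype.card {i // |hD.eigenvalues i| < ε} :=
    finrank_coordSpan _ _
  set U := W.map (projl : EuclideanSpace ℂ (Fin k ⊕ Fin m) →ₗ[ℂ] EuclideanSpace ℂ (Fin k))
    with hUdef
  have hker : LinearMap.ker ((projl :
      EuclideanSpace ℂ (Fin k ⊕ Fin m) →ₗ[ℂ] EuclideanSpace ℂ (Fin k)).domRestrict W) = ⊥ := by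
    rw [LinearMap.ker_eq_bot']
    rintro ⟨x, hxW⟩ hfx
    have hfx' : (projl x : EuclideanSpace ℂ (Fin k)) = 0 := hfx
    refine Subtype.ext ?_
    by_contra hxne
    exact (key x hxW hxne).1 hfx'
  have hrange : LinearMap.range ((projl :
      EuclideanSpace ℂ (Fin k ⊕ Fin m) →ₗ[ℂ] EuclideanSpace ℂ (Fin k)).domRestrict W) = U :=
    LinearMap.range_domRestrict W _
  have hWU : Module.finrank ℂ W ≤ Module.finrank ℂ U := by
    have := LinearMap.finrank_range_of_inj (LinearMap.ker_eq_bot.1 hker)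
    rw [hrange] at this
    rw [← this]
  have hUcount : Module.finrank ℂ U ≤ Fintype.card {i // |hS.eigenvalues i| < β * ε} := by
    refine finrank_le_card_eig hS (β * ε) U ?_
    rintro u hu hune
    obtain ⟨x, hxW, rfl⟩ := Submodule.mem_map.1 hu
    have hxne : x ≠ 0 := by rintro rfl; exact hune (map_zero _)
    exact (key x hxW hxne).2
  rw [hcardD]
  calc Fintype.card {i // |hD.eigenvalues i| < ε} = Module.finrank ℂ W := hWrank.symm
    _ ≤ Module.finrank ℂ U := hWU
    _ ≤ Fintype.card {i // |hS.eigenvalues i| < β * ε} := hUcount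
    _ = Fintype.card {i // hS.eigenvalues i ∈ Set.Ioo (-(β * ε)) (β * ε)} := hcardS.symm
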